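/- (Concentration of the clipped estimator with divergence-based clipping level.) Let 0 < ε ≤ 2/e and δ > 0, set η = 2·log(2/ε)·M and μ = ∫ Y dP, and define W_s = Y(X_s)·r(X_s)·1{r(X_s) ≤ η} for s = 1,…,t. Then the probability of the event { μ − δ − ε/2 ≤ (1/t)·Σ_{s=1}^t W_s ≤ μ + δ } is at least 1 − 2·exp(−δ²·t/(8·(log(2/ε))²·M²)). -/

import Mathlib

open MeasureTheory ProbabilityTheory
open scoped ENNReal NNReal

lemma mgf_le_of_bounded' {Ω : Type*} [MeasurableSpace Ω] {μ : Measure Ω} [IsProbabilityMeasure μ]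
    {Z : Ω → ℝ} (hZmeas : Measurable Z) {c : ℝ} (hc : 0 < c)
    (hZbd : ∀ ω, |Z ω| ≤ c) (hZmean : ∫ ω, Z ω ∂μ = 0) (l : ℝ) :
    mgf Z μ l ≤ Real.exp (l ^ 2 * c ^ 2 / 2) := by
  have hZint : Integrable Z μ :=
    (integrable_const c).mono' hZmeas.aestronglyMeasurable (Filter.Eventually.of_forall hZbd)
  have hexpint : Integrable (fun ω => Real.exp (l * Z ω)) μ := by
    refine (integrable_const (Real.exp (|l| * c))).mono'
      ((hZmeas.const_mul l).exp).aestronglyMeasurable (Filter.Eventually.of_forall fun ω => ?_)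
    rw [Real.norm_eq_abs, abs_of_nonneg (Real.exp_pos _).le]
    refine Real.exp_le_exp.2 ?_
    calc l * Z ω ≤ |l * Z ω| := le_abs_self _
      _ = |l| * |Z ω| := abs_mul _ _
      _ ≤ |l| * c := by gcongr; exact hZbd ω
  have key : ∀ ω, Real.exp (l * Z ω) ≤
      Real.cosh (l * c) + Z ω * (Real.sinh (l * c) / c) := by
    intro ω
    have h1 := abs_le.1 (hZbd ω)
    have ha : (0:ℝ) ≤ (c - Z ω) / (2 * c) := by
      apply div_nonneg (by linarith [h1.2]) (by linarith)
    have hb : (0:ℝ) ≤ (c + Z ω) / (2 * c) := by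
      apply div_nonneg (by linarith [h1.1]) (by linarith)
    have hab : (c - Z ω) / (2 * c) + (c + Z ω) / (2 * c) = 1 := by
      field_simp; ring
    have hconv := convexOn_exp.2 (Set.mem_univ (-(l * c))) (Set.mem_univ (l * c)) ha hb hab
    simp only [smul_eq_mul] at hconv
    have heq : (c - Z ω) / (2 * c) * (-(l * c)) + (c + Z ω) / (2 * c) * (l * c) = l * Z ω := by
      field_simp
      ring
    rw [heq] at hconv
    refine hconv.trans_eq ?_
    rw [Real.cosh_eq, Real.sinh_eq]
    field_simp
    ring
  calc mgf Z μ l = ∫ ω, Real.exp (l * Z ω) ∂μ := rfl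
    _ ≤ ∫ ω, (Real.cosh (l * c) + Z ω * (Real.sinh (l * c) / c)) ∂μ := by
        refine integral_mono hexpint ?_ key
        exact (integrable_const _).add (hZint.mul_const _)
    _ = Real.cosh (l * c) := by
        rw [integral_add (integrable_const _) (hZint.mul_const _), integral_const,
          integral_mul_const, hZmean]
        simp
    _ ≤ Real.exp ((l * c) ^ 2 / 2) := Real.cosh_le_exp_half_sq _
    _ = Real.exp (l ^ 2 * c ^ 2 / 2) := by rw [mul_pow]

lemma tail_sum_le' {Ω' : Type*} [MeasurableSpace Ω'] {Pr : Measure Ω'} [IsProbabilityMeasure Pr]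
    {n : ℕ} {Z : Fin n → Ω' → ℝ} (hmeas : ∀ i, Measurable (Z i))
    (hindep : iIndepFun Z Pr) {c : ℝ} (hc : 0 < c)
    (hbd : ∀ i ω, |Z i ω| ≤ c) (hmean : ∀ i, ∫ ω, Z i ω ∂Pr = 0)
    {a : ℝ} (ha : 0 < a) :
    (Pr {ω | a * n ≤ ∑ i, Z i ω}).toReal ≤ Real.exp (-(a ^ 2 * n) / (2 * c ^ 2)) := by
  set l : ℝ := a / c ^ 2 with hl
  have hl0 : 0 < l := by positivity
  have hint : ∀ i : Fin n, Integrable (fun ω => Real.exp (l * Z i ω)) Pr := by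
    intro i
    refine (integrable_const (Real.exp (|l| * c))).mono'
      (((hmeas i).const_mul l).exp).aestronglyMeasurable (Filter.Eventually.of_forall fun ω => ?_)
    rw [Real.norm_eq_abs, abs_of_nonneg (Real.exp_pos _).le]
    refine Real.exp_le_exp.2 ?_
    calc l * Z i ω ≤ |l * Z i ω| := le_abs_self _
      _ = |l| * |Z i ω| := abs_mul _ _
      _ ≤ |l| * c := by gcongr; exact hbd i ω
  have hsumint : Integrable (fun ω => Real.exp (l * (∑ i, Z i) ω)) Pr :=
    hindep.integrable_exp_mul_sum hmeas (fun i _ => hint i)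
  have hset : {ω | a * n ≤ ∑ i, Z i ω} = {ω | a * n ≤ (∑ i, Z i) ω} := by
    ext ω; simp [Finset.sum_apply]
  have hcher := measure_ge_le_exp_mul_mgf (X := ∑ i, Z i) (μ := Pr) (a * n) hl0.le hsumint
  rw [hset]
  refine hcher.trans ?_
  have hmgf : mgf (∑ i, Z i) Pr l ≤ Real.exp (l ^ 2 * c ^ 2 / 2) ^ n := by
    rw [hindep.mgf_sum hmeas]
    calc ∏ i, mgf (Z i) Pr l ≤ ∏ _i : Fin n, Real.exp (l ^ 2 * c ^ 2 / 2) :=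
          Finset.prod_le_prod (fun i _ => mgf_nonneg)
            (fun i _ => mgf_le_of_bounded' (hmeas i) hc (hbd i) (hmean i) l)
      _ = Real.exp (l ^ 2 * c ^ 2 / 2) ^ n := by simp
  calc Real.exp (-l * (a * n)) * mgf (∑ i, Z i) Pr l
      ≤ Real.exp (-l * (a * n)) * Real.exp (l ^ 2 * c ^ 2 / 2) ^ n := by
        gcongr
    _ = Real.exp (-(a ^ 2 * n) / (2 * c ^ 2)) := by
        rw [← Real.exp_nat_mul, ← Real.exp_add]
        congr 1
        rw [hl]
        field_simp
        ring

/-- Concentration of the clipped estimator with divergence-based clipping level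
`η = 2·log(2/ε)·M`, where `M = 1 + log(1 + D)`: with probability at least
`1 − 2·exp(−δ²t/(8·(log(2/ε))²·M²))` the clipped empirical mean lies in
`[μ − δ − ε/2, μ + δ]`, where `μ = ∫ Y dP`. -/
theorem stmt6 {Ω : Type*} [mΩ : MeasurableSpace Ω]
    (P Q : Measure Ω) [IsProbabilityMeasure P] [IsProbabilityMeasure Q]
    (r : Ω → ℝ) (hr_meas : Measurable r) (hr_nonneg : ∀ ω, 0 ≤ r ω)
    (hPQ : ∀ A : Set Ω, MeasurableSet A → (P A).toReal = ∫ ω in A, r ω ∂Q)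
    (Y : Ω → ℝ) (hY_meas : Measurable Y)
    (hY0 : ∀ ω, 0 ≤ Y ω) (hY1 : ∀ ω, Y ω ≤ 1)
    (hint : Integrable (fun ω => r ω * Real.exp (r ω)) Q)
    (D : ℝ) (hD : D = ∫ ω, (r ω * Real.exp (r ω - 1) - 1) ∂Q)
    (M : ℝ) (hM : M = 1 + Real.log (1 + D))
    (ε : ℝ) (hε0 : 0 < ε) (hε1 : ε ≤ 2 / Real.exp 1)
    (η : ℝ) (hη : η = 2 * Real.log (2 / ε) * M)
    {Ω' : Type*} [MeasurableSpace Ω'] (Pr : Measure Ω') [IsProbabilityMeasure Pr]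
    (t : ℕ) (ht : 1 ≤ t) (X : Fin t → Ω' → Ω)
    (hX_meas : ∀ s, Measurable (X s))
    (hX_indep : iIndepFun (m := fun _ => mΩ) X Pr)
    (hX_dist : ∀ s, Measure.map (X s) Pr = Q)
    (δ : ℝ) (hδ : 0 < δ) :
    1 - 2 * Real.exp (-(δ ^ 2 * t) / (8 * Real.log (2 / ε) ^ 2 * M ^ 2)) ≤
      (Pr {ω' | (∫ ω, Y ω ∂P) - δ - ε / 2 ≤
          (1 / t) * ∑ s, (if r (X s ω') ≤ η then Y (X s ω') * r (X s ω') else 0) ∧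
          (1 / t) * ∑ s, (if r (X s ω') ≤ η then Y (X s ω') * r (X s ω') else 0) ≤
          (∫ ω, Y ω ∂P) + δ}).toReal := by
  set L := Real.log (2 / ε) with hL
  have hε2 : (0:ℝ) < 2 / ε := by positivity
  have hL1 : 1 ≤ L := by
    have h2 : Real.exp 1 ≤ 2 / ε := by
      rw [le_div_iff₀ hε0]
      calc Real.exp 1 * ε = ε * Real.exp 1 := mul_comm _ _
        _ ≤ (2 / Real.exp 1) * Real.exp 1 := by gcongr
        _ = 2 := by field_simp
    calc (1:ℝ) = Real.log (Real.exp 1) := (Real.log_exp 1).symm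
      _ ≤ L := Real.log_le_log (Real.exp_pos 1) h2
  -- integrability of r
  have hr_int : Integrable r Q := by
    refine hint.mono' hr_meas.aestronglyMeasurable (Filter.Eventually.of_forall fun ω => ?_)
    rw [Real.norm_eq_abs, abs_of_nonneg (hr_nonneg ω)]
    nlinarith [Real.one_le_exp (hr_nonneg ω), hr_nonneg ω]
  have hf1_int : Integrable (fun ω => r ω * Real.exp (r ω - 1)) Q := by
    have heq : (fun ω => r ω * Real.exp (r ω - 1)) =
        fun ω => (r ω * Real.exp (r ω)) * Real.exp (-1) := by
      funext ω
      rw [mul_assoc, ← Real.exp_add]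
      ring_nf
    rw [heq]
    exact hint.mul_const _
  have hr1 : ∫ ω, r ω ∂Q = 1 := by
    have := hPQ Set.univ MeasurableSet.univ
    simpa using this.symm
  -- D ≥ 0
  have hD0 : 0 ≤ D := by
    have hpt : ∀ ω, 2 * r ω - 2 ≤ r ω * Real.exp (r ω - 1) - 1 := by
      intro ω
      nlinarith [Real.add_one_le_exp (r ω - 1), hr_nonneg ω, sq_nonneg (r ω - 1)]
    have h1 : ∫ ω, (2 * r ω - 2) ∂Q ≤ ∫ ω, (r ω * Real.exp (r ω - 1) - 1) ∂Q := by
      refine integral_mono ?_ ?_ hpt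
      · exact (hr_int.const_mul 2).sub (integrable_const 2)
      · exact hf1_int.sub (integrable_const 1)
    have h2 : ∫ ω, (2 * r ω - 2) ∂Q = 0 := by
      rw [integral_sub (hr_int.const_mul 2) (integrable_const 2), integral_const_mul, hr1]
      simp
    rw [hD]; linarith
  have hM1 : 1 ≤ M := by
    rw [hM]
    have : 0 ≤ Real.log (1 + D) := Real.log_nonneg (by linarith)
    linarith
  have hη0 : 0 < η := by rw [hη]; nlinarith
  -- clipped weight function
  set W : Ω → ℝ := fun ω => if r ω ≤ η then Y ω * r ω else 0 with hWdef
  have hW_meas : Measurable W :=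
    Measurable.ite (measurableSet_le hr_meas measurable_const)
      (hY_meas.mul hr_meas) measurable_const
  have hW0 : ∀ ω, 0 ≤ W ω := by
    intro ω; rw [hWdef]; dsimp only
    split
    · exact mul_nonneg (hY0 ω) (hr_nonneg ω)
    · exact le_refl 0
  have hWη : ∀ ω, W ω ≤ η := by
    intro ω; rw [hWdef]; dsimp only
    split
    · rename_i h
      calc Y ω * r ω ≤ 1 * r ω := by gcongr; exacts [hr_nonneg ω, hY1 ω]
        _ = r ω := one_mul _
        _ ≤ η := h
    · exact hη0.le
  have hW_int : Integrable W Q := by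
    refine (integrable_const η).mono' hW_meas.aestronglyMeasurable
      (Filter.Eventually.of_forall fun ω => ?_)
    rw [Real.norm_eq_abs, abs_of_nonneg (hW0 ω)]
    exact hWη ω
  set m : ℝ := ∫ ω, W ω ∂Q with hm
  have hm0 : 0 ≤ m := integral_nonneg hW0
  have hmη : m ≤ η := by
    calc m ≤ ∫ _ω, η ∂Q := integral_mono hW_int (integrable_const η) hWη
      _ = η := by simp
  -- P = Q.withDensity r
  have hPden : P = Q.withDensity (fun ω => ENNReal.ofReal (r ω)) := by
    ext A hA
    rw [withDensity_apply _ hA,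
      ← ofReal_integral_eq_lintegral_ofReal hr_int.restrict
        (Filter.Eventually.of_forall hr_nonneg),
      ← hPQ A hA, ENNReal.ofReal_toReal (measure_ne_top P A)]
  have hμ : ∫ ω, Y ω ∂P = ∫ ω, Y ω * r ω ∂Q := by
    rw [hPden]
    have e0 : Q.withDensity (fun ω => ENNReal.ofReal (r ω)) =
        Q.withDensity (fun ω => ((r ω).toNNReal : ℝ≥0∞)) := rfl
    rw [e0, integral_withDensity_eq_integral_smul
      (f := fun ω => (r ω).toNNReal) (measurable_real_toNNReal.comp hr_meas) Y]
    congr 1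
    funext ω
    simp [NNReal.smul_def, Real.coe_toNNReal _ (hr_nonneg ω), mul_comm]
  have hYr_int : Integrable (fun ω => Y ω * r ω) Q := by
    refine hr_int.mono' (hY_meas.mul hr_meas).aestronglyMeasurable
      (Filter.Eventually.of_forall fun ω => ?_)
    rw [Real.norm_eq_abs, abs_of_nonneg (mul_nonneg (hY0 ω) (hr_nonneg ω))]
    calc Y ω * r ω ≤ 1 * r ω := by gcongr; exacts [hr_nonneg ω, hY1 ω]
      _ = r ω := one_mul _
  -- bias bounds
  have hg0 : ∀ ω, 0 ≤ Y ω * r ω - W ω := by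
    intro ω; rw [hWdef]; dsimp only
    split
    · simp
    · simpa using mul_nonneg (hY0 ω) (hr_nonneg ω)
  have hgle : ∀ ω, Y ω * r ω - W ω ≤ Real.exp (1 - η) * (r ω * Real.exp (r ω - 1)) := by
    intro ω; rw [hWdef]; dsimp only
    split
    · rename_i h
      simp only [sub_self]
      exact mul_nonneg (Real.exp_pos _).le (mul_nonneg (hr_nonneg ω) (Real.exp_pos _).le)
    · rename_i h
      push_neg at h
      rw [sub_zero]
      have h1 : Y ω * r ω ≤ r ω := by
        calc Y ω * r ω ≤ 1 * r ω := by gcongr; exacts [hr_nonneg ω, hY1 ω]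
          _ = r ω := one_mul _
      refine h1.trans ?_
      have h2 : Real.exp (1 - η) * Real.exp (r ω - 1) = Real.exp (r ω - η) := by
        rw [← Real.exp_add]; ring_nf
      have h3 : (1:ℝ) ≤ Real.exp (r ω - η) := Real.one_le_exp (by linarith)
      calc r ω = r ω * 1 := (mul_one _).symm
        _ ≤ r ω * Real.exp (r ω - η) := by gcongr; exact hr_nonneg ω
        _ = Real.exp (1 - η) * (r ω * Real.exp (r ω - 1)) := by rw [← h2]; ring
  have hf1val : ∫ ω, r ω * Real.exp (r ω - 1) ∂Q = D + 1 := by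
    rw [hD, integral_sub hf1_int (integrable_const 1)]
    simp
  have hbias : ∫ ω, Y ω ∂P - m ≤ Real.exp (1 - η) * (D + 1) := by
    rw [hμ, hm, ← integral_sub hYr_int hW_int]
    calc ∫ ω, (Y ω * r ω - W ω) ∂Q
        ≤ ∫ ω, Real.exp (1 - η) * (r ω * Real.exp (r ω - 1)) ∂Q :=
          integral_mono (hYr_int.sub hW_int) (hf1_int.const_mul _) hgle
      _ = Real.exp (1 - η) * (D + 1) := by rw [integral_const_mul, hf1val]
  have hm_le : m ≤ ∫ ω, Y ω ∂P := by
    rw [hμ, hm]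
    refine integral_mono hW_int hYr_int fun ω => ?_
    linarith [hg0 ω]
  have hexp_small : Real.exp (1 - η) * (D + 1) ≤ ε / 2 := by
    have hD1 : (0:ℝ) < 1 + D := by linarith
    have e1 : Real.exp (1 - η) * (D + 1) = Real.exp (1 - η + Real.log (1 + D)) := by
      rw [Real.exp_add, Real.exp_log hD1]; ring
    have e2 : ε / 2 = Real.exp (-L) := by
      rw [hL, Real.exp_neg, Real.exp_log hε2, inv_div]
    rw [e1, e2]
    apply Real.exp_le_exp.2
    have hlog : Real.log (1 + D) = M - 1 := by rw [hM]; ring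
    rw [hlog, hη]
    nlinarith [mul_nonneg (sub_nonneg.2 hL1) (sub_nonneg.2 hM1)]
  have hm_ge : (∫ ω, Y ω ∂P) - ε / 2 ≤ m := by linarith
  -- random variables on Ω'
  have ht0 : (0:ℝ) < t := by exact_mod_cast ht
  set Z : Fin t → Ω' → ℝ := fun i => (fun x => W x - m) ∘ X i with hZdef
  set Z' : Fin t → Ω' → ℝ := fun i => (fun x => m - W x) ∘ X i with hZ'def
  have hZmeas : ∀ i, Measurable (Z i) := fun i => (hW_meas.sub measurable_const).comp (hX_meas i)
  have hZ'meas : ∀ i, Measurable (Z' i) :=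
    fun i => (measurable_const.sub hW_meas).comp (hX_meas i)
  have hZbd : ∀ i ω', |Z i ω'| ≤ η := by
    intro i ω'
    rw [abs_le]
    constructor <;> simp only [hZdef, Function.comp_apply] <;>
      [linarith [hW0 (X i ω'), hmη]; linarith [hWη (X i ω'), hm0]]
  have hZ'bd : ∀ i ω', |Z' i ω'| ≤ η := by
    intro i ω'
    have := hZbd i ω'
    have he : Z' i ω' = -(Z i ω') := by simp [hZdef, hZ'def]
    rw [he, abs_neg]; exact this
  have hVmean : ∀ i, ∫ ω', W (X i ω') ∂Pr = m := by
    intro i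
    rw [hm, ← hX_dist i, integral_map (hX_meas i).aemeasurable hW_meas.aestronglyMeasurable]
  have hV_int : ∀ i, Integrable (fun ω' => W (X i ω')) Pr := by
    intro i
    refine (integrable_const η).mono' (hW_meas.comp (hX_meas i)).aestronglyMeasurable
      (Filter.Eventually.of_forall fun ω' => ?_)
    rw [Real.norm_eq_abs, abs_of_nonneg (hW0 _)]
    exact hWη _
  have hZmean : ∀ i, ∫ ω', Z i ω' ∂Pr = 0 := by
    intro i
    simp only [hZdef, Function.comp_apply]
    rw [integral_sub (hV_int i) (integrable_const m), hVmean i, integral_const]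
    simp
  have hZ'mean : ∀ i, ∫ ω', Z' i ω' ∂Pr = 0 := by
    intro i
    simp only [hZ'def, Function.comp_apply]
    rw [integral_sub (integrable_const m) (hV_int i), hVmean i, integral_const]
    simp
  have hZindep : iIndepFun Z Pr :=
    hX_indep.comp (fun _ x => W x - m) (fun _ => hW_meas.sub measurable_const)
  have hZ'indep : iIndepFun Z' Pr :=
    hX_indep.comp (fun _ x => m - W x) (fun _ => measurable_const.sub hW_meas)
  have hA := tail_sum_le' hZmeas hZindep hη0 hZbd hZmean hδ
  have hB := tail_sum_le' hZ'meas hZ'indep hη0 hZ'bd hZ'mean hδ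
  set A : Set Ω' := {ω' | δ * t ≤ ∑ i, Z i ω'} with hAdef
  set B : Set Ω' := {ω' | δ * t ≤ ∑ i, Z' i ω'} with hBdef
  set E : Set Ω' := {ω' | (∫ ω, Y ω ∂P) - δ - ε / 2 ≤
      (1 / t) * ∑ s, (if r (X s ω') ≤ η then Y (X s ω') * r (X s ω') else 0) ∧
      (1 / t) * ∑ s, (if r (X s ω') ≤ η then Y (X s ω') * r (X s ω') else 0) ≤
      (∫ ω, Y ω ∂P) + δ} with hEdef
  have hE_meas : MeasurableSet E := by
    have hf : Measurable (fun ω' =>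
        (1 / (t:ℝ)) * ∑ s, (if r (X s ω') ≤ η then Y (X s ω') * r (X s ω') else 0)) := by
      apply Measurable.const_mul
      apply Finset.measurable_sum
      intro s _
      exact Measurable.ite
        (measurableSet_le (hr_meas.comp (hX_meas s)) measurable_const)
        ((hY_meas.comp (hX_meas s)).mul (hr_meas.comp (hX_meas s))) measurable_const
    have : E = (fun ω' =>
        (1 / (t:ℝ)) * ∑ s, (if r (X s ω') ≤ η then Y (X s ω') * r (X s ω') else 0)) ⁻¹'
        (Set.Icc ((∫ ω, Y ω ∂P) - δ - ε / 2) ((∫ ω, Y ω ∂P) + δ)) := by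
      ext ω'; simp [hEdef, Set.mem_Icc]
    rw [this]
    exact hf measurableSet_Icc
  have hsum : ∀ ω', ∑ i, Z i ω' = (∑ s, W (X s ω')) - t * m := by
    intro ω'
    simp only [hZdef, Function.comp_apply]
    rw [Finset.sum_sub_distrib, Finset.sum_const, Finset.card_univ, Fintype.card_fin,
      nsmul_eq_mul]
  have hsum' : ∀ ω', ∑ i, Z' i ω' = t * m - (∑ s, W (X s ω')) := by
    intro ω'
    simp only [hZ'def, Function.comp_apply]
    rw [Finset.sum_sub_distrib, Finset.sum_const, Finset.card_univ, Fintype.card_fin,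
      nsmul_eq_mul]
  have hcompl : Eᶜ ⊆ A ∪ B := by
    intro ω' hω'
    by_contra hAB
    rw [Set.mem_union] at hAB
    push_neg at hAB
    obtain ⟨hA1, hB1⟩ := hAB
    rw [hAdef, Set.mem_setOf_eq, not_le, hsum ω'] at hA1
    rw [hBdef, Set.mem_setOf_eq, not_le, hsum' ω'] at hB1
    apply hω'
    rw [hEdef, Set.mem_setOf_eq]
    have hWsum : ∀ s : Fin t, (if r (X s ω') ≤ η then Y (X s ω') * r (X s ω') else 0)
        = W (X s ω') := fun s => rfl
    constructor
    · simp only [hWsum]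
      rw [one_div, ← div_eq_inv_mul, le_div_iff₀ ht0]
      linarith [mul_le_mul_of_nonneg_right hm_ge ht0.le]
    · simp only [hWsum]
      rw [one_div, ← div_eq_inv_mul, div_le_iff₀ ht0]
      linarith [mul_le_mul_of_nonneg_right hm_le ht0.le]
  have hexp_eq : -(δ ^ 2 * (t:ℝ)) / (2 * η ^ 2) = -(δ ^ 2 * t) / (8 * L ^ 2 * M ^ 2) := by
    rw [hη]; ring
  rw [hexp_eq] at hA hB
  have hEc : (Pr Eᶜ).toReal ≤ 2 * Real.exp (-(δ ^ 2 * t) / (8 * L ^ 2 * M ^ 2)) := by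
    calc (Pr Eᶜ).toReal ≤ (Pr A + Pr B).toReal := by
          apply ENNReal.toReal_mono
          · exact ENNReal.add_ne_top.2 ⟨measure_ne_top _ _, measure_ne_top _ _⟩
          · exact (measure_mono hcompl).trans (measure_union_le A B)
      _ = (Pr A).toReal + (Pr B).toReal :=
          ENNReal.toReal_add (measure_ne_top _ _) (measure_ne_top _ _)
      _ ≤ _ := by linarith
  have h1 : (Pr Eᶜ).toReal = 1 - (Pr E).toReal := by
    rw [prob_compl_eq_one_sub hE_meas,
      ENNReal.toReal_sub_of_le prob_le_one ENNReal.one_ne_top, ENNReal.toReal_one]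
  linarith
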